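/- arXiv:2602.17230 — 4 statements merged into one kernel-verified Lean document; each statement's English description precedes it below -/
import Mathlib

section
/- For every integer s ≥ 1, setting μ = 17 + s, the following inequality of rational numbers holds: (6/7 − 3/2)² + (15/14 − 3/2)² + (17/14 − 3/2)² + (9/7 − 3/2)² + (19/14 − 3/2)² + (10/7 − 3/2)² + (3/2 − 3/2)² + (11/7 − 3/2)² + (23/14 − 3/2)² + (12/7 − 3/2)² + (25/14 − 3/2)² + (27/14 − 3/2)² + (15/7 − 3/2)² + ∑_{l=1}^{s+4} ((2l + 2s + 7)/(2(s+4)) − 3/2)² ≤ (μ/12)·(15/7 − 6/7). -/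
open Finset

lemma sum1Q (m : ℕ) : ∑ l ∈ Finset.Icc 1 m, (l : ℚ) = m * (m + 1) / 2 := by
  induction m with
  | zero => simp
  | succ n ih =>
    rw [Finset.sum_Icc_succ_top (by omega), ih]
    push_cast
    ring

lemma sum2Q (m : ℕ) : ∑ l ∈ Finset.Icc 1 m, (l : ℚ) ^ 2 = m * (m + 1) * (2 * m + 1) / 6 := by
  induction m with
  | zero => simp
  | succ n ih =>
    rw [Finset.sum_Icc_succ_top (by omega), ih]
    push_cast
    ring

theorem stmt_8 (s : ℕ) (hs : 1 ≤ s) :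
    ((6/7 : ℚ) - 3/2) ^ 2 +
      ((15/14 : ℚ) - 3/2) ^ 2 +
      ((17/14 : ℚ) - 3/2) ^ 2 +
      ((9/7 : ℚ) - 3/2) ^ 2 +
      ((19/14 : ℚ) - 3/2) ^ 2 +
      ((10/7 : ℚ) - 3/2) ^ 2 +
      ((3/2 : ℚ) - 3/2) ^ 2 +
      ((11/7 : ℚ) - 3/2) ^ 2 +
      ((23/14 : ℚ) - 3/2) ^ 2 +
      ((12/7 : ℚ) - 3/2) ^ 2 +
      ((25/14 : ℚ) - 3/2) ^ 2 +
      ((27/14 : ℚ) - 3/2) ^ 2 +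
      ((15/7 : ℚ) - 3/2) ^ 2 +
      ∑ l ∈ Finset.Icc 1 (s + 4), ((2 * (l : ℚ) + 2 * (s : ℚ) + 7) / (2 * ((s : ℚ) + 4)) - 3/2) ^ 2
    ≤ ((17 + (s : ℚ)) / 12) * (15/7 - 6/7) := by
  have hd : (2 * ((s : ℚ) + 4)) ≠ 0 := by positivity
  have hsum : ∑ l ∈ Finset.Icc 1 (s + 4),
      ((2 * (l : ℚ) + 2 * (s : ℚ) + 7) / (2 * ((s : ℚ) + 4)) - 3/2) ^ 2
      = (∑ l ∈ Finset.Icc 1 (s + 4),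
          (4 * (l : ℚ)^2 - 4 * ((s:ℚ)+5) * l + ((s:ℚ)+5)^2)) / (2 * ((s : ℚ) + 4))^2 := by
    rw [Finset.sum_div]
    refine Finset.sum_congr rfl fun l _ => ?_
    field_simp
    ring
  rw [hsum, Finset.sum_add_distrib, Finset.sum_sub_distrib, ← Finset.mul_sum, ← Finset.mul_sum,
    sum1Q, sum2Q, Finset.sum_const, Nat.card_Icc]
  have hs' : (1 : ℚ) ≤ (s : ℚ) := by exact_mod_cast hs
  rw [nsmul_eq_mul, ← sub_nonneg]
  have hm : (0:ℚ) < (s : ℚ) + 4 := by positivity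
  have key : ((17 + (s : ℚ)) / 12) * (15/7 - 6/7) -
      (((6/7 : ℚ) - 3/2) ^ 2 + ((15/14 : ℚ) - 3/2) ^ 2 + ((17/14 : ℚ) - 3/2) ^ 2 +
        ((9/7 : ℚ) - 3/2) ^ 2 + ((19/14 : ℚ) - 3/2) ^ 2 + ((10/7 : ℚ) - 3/2) ^ 2 +
        ((3/2 : ℚ) - 3/2) ^ 2 + ((11/7 : ℚ) - 3/2) ^ 2 + ((23/14 : ℚ) - 3/2) ^ 2 +
        ((12/7 : ℚ) - 3/2) ^ 2 + ((25/14 : ℚ) - 3/2) ^ 2 + ((27/14 : ℚ) - 3/2) ^ 2 +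
        ((15/7 : ℚ) - 3/2) ^ 2 +
        (4 * (((s+4 : ℕ) : ℚ) * (((s+4 : ℕ) : ℚ) + 1) * (2 * ((s+4 : ℕ) : ℚ) + 1) / 6) -
          4 * ((s:ℚ) + 5) * (((s+4 : ℕ) : ℚ) * (((s+4 : ℕ) : ℚ) + 1) / 2) +
          ((s + 4 + 1 - 1 : ℕ) : ℚ) * ((s:ℚ) + 5) ^ 2) / (2 * ((s : ℚ) + 4)) ^ 2) =
      (2 * ((s:ℚ) + 4) - 7) * (((s:ℚ) + 4) - 1) / (84 * ((s:ℚ) + 4)) := by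
    push_cast
    field_simp
    ring
  rw [key]
  have hs' : (1 : ℚ) ≤ (s : ℚ) := by exact_mod_cast hs
  apply div_nonneg
  · nlinarith
  · positivity
end

section
/- For every integer k ≥ 1, setting μ = 17 + 2k, the following inequality of rational numbers holds: (13/15 − 3/2)² + (16/15 − 3/2)² + (19/15 − 3/2)² + (4/3 − 3/2)² + (22/15 − 3/2)² + (23/15 − 3/2)² + (5/3 − 3/2)² + (26/15 − 3/2)² + (29/15 − 3/2)² + (32/15 − 3/2)² + ∑_{l=1}^{2k+7} ((l + 2k + 8)/(2(k+4)) − 3/2)² ≤ (μ/12)·(32/15 − 13/15). -/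
lemma sumsq (b : ℚ) : ∀ n : ℕ, ∑ l ∈ Finset.Icc 1 n, ((l : ℚ) + b) ^ 2
    = (n : ℚ) * (n + 1) * (2 * n + 1) / 6 + n * (n + 1) * b + n * b ^ 2 := by
  intro n
  induction n with
  | zero => simp
  | succ n ih =>
      rw [Finset.sum_Icc_succ_top (by omega : 1 ≤ n + 1), ih]
      push_cast
      ring

theorem stmt_10 (k : ℕ) (hk : 1 ≤ k) :
    ((13/15 : ℚ) - 3/2) ^ 2 +
      ((16/15 : ℚ) - 3/2) ^ 2 +
      ((19/15 : ℚ) - 3/2) ^ 2 +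
      ((4/3 : ℚ) - 3/2) ^ 2 +
      ((22/15 : ℚ) - 3/2) ^ 2 +
      ((23/15 : ℚ) - 3/2) ^ 2 +
      ((5/3 : ℚ) - 3/2) ^ 2 +
      ((26/15 : ℚ) - 3/2) ^ 2 +
      ((29/15 : ℚ) - 3/2) ^ 2 +
      ((32/15 : ℚ) - 3/2) ^ 2 +
      ∑ l ∈ Finset.Icc 1 (2 * k + 7), (((l : ℚ) + 2 * (k : ℚ) + 8) / (2 * ((k : ℚ) + 4)) - 3/2) ^ 2
    ≤ ((17 + 2 * (k : ℚ)) / 12) * (32/15 - 13/15) := by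
  have h4 : (0 : ℚ) < (k : ℚ) + 4 := by positivity
  have h4' : ((k : ℚ) + 4) ≠ 0 := ne_of_gt h4
  have hsum : ∑ l ∈ Finset.Icc 1 (2 * k + 7),
      (((l : ℚ) + 2 * (k : ℚ) + 8) / (2 * ((k : ℚ) + 4)) - 3/2) ^ 2
      = (∑ l ∈ Finset.Icc 1 (2 * k + 7), ((l : ℚ) + (-(k : ℚ) - 4)) ^ 2)
        / (4 * ((k : ℚ) + 4) ^ 2) := by
    rw [Finset.sum_div]
    refine Finset.sum_congr rfl fun l _ => ?_
    field_simp
    ring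
  rw [hsum, sumsq]
  push_cast
  rw [add_div' _ _ _ (by positivity : (4*((k:ℚ)+4)^2) ≠ 0),
    div_le_iff₀ (by positivity : (0:ℚ) < 4*((k:ℚ)+4)^2)]
  nlinarith [sq_nonneg ((k : ℚ) + 4), (by exact_mod_cast hk : (1:ℚ) ≤ (k:ℚ)), sq_nonneg (k:ℚ)]
end

section
/- For every integer k ≥ 0, setting μ = 19 + 2k, the following inequality of rational numbers holds: (19/22 − 3/2)² + (23/22 − 3/2)² + (27/22 − 3/2)² + (29/22 − 3/2)² + (31/22 − 3/2)² + (3/2 − 3/2)² + (35/22 − 3/2)² + (37/22 − 3/2)² + (39/22 − 3/2)² + (43/22 − 3/2)² + (47/22 − 3/2)² + ∑_{l=1}^{2k+8} ((l + 2k + 9)/(2k+9) − 3/2)² ≤ (μ/12)·(47/22 − 19/22). -/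
lemma sum_Icc_id_q (n : ℕ) : ∑ l ∈ Finset.Icc 1 n, (l : ℚ) = n * (n + 1) / 2 := by
  induction n with
  | zero => simp
  | succ n ih =>
    rw [Finset.sum_Icc_succ_top (by omega), ih]
    push_cast
    ring

lemma sum_Icc_sq_q (n : ℕ) : ∑ l ∈ Finset.Icc 1 n, (l : ℚ) ^ 2 = n * (n + 1) * (2 * n + 1) / 6 := by
  induction n with
  | zero => simp
  | succ n ih =>
    rw [Finset.sum_Icc_succ_top (by omega), ih]
    push_cast
    ring

theorem stmt_13 (k : ℕ) :
    ((19/22 : ℚ) - 3/2) ^ 2 +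
      ((23/22 : ℚ) - 3/2) ^ 2 +
      ((27/22 : ℚ) - 3/2) ^ 2 +
      ((29/22 : ℚ) - 3/2) ^ 2 +
      ((31/22 : ℚ) - 3/2) ^ 2 +
      ((3/2 : ℚ) - 3/2) ^ 2 +
      ((35/22 : ℚ) - 3/2) ^ 2 +
      ((37/22 : ℚ) - 3/2) ^ 2 +
      ((39/22 : ℚ) - 3/2) ^ 2 +
      ((43/22 : ℚ) - 3/2) ^ 2 +
      ((47/22 : ℚ) - 3/2) ^ 2 +
      ∑ l ∈ Finset.Icc 1 (2 * k + 8), (((l : ℚ) + 2 * (k : ℚ) + 9) / (2 * (k : ℚ) + 9) - 3/2) ^ 2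
    ≤ ((19 + 2 * (k : ℚ)) / 12) * (47/22 - 19/22) := by
  set x : ℚ := (k : ℚ) with hx
  have hx0 : 0 ≤ x := by positivity
  have hm : (2 * x + 9) ≠ 0 := by positivity
  have hsum : ∑ l ∈ Finset.Icc 1 (2 * k + 8),
      (((l : ℚ) + 2 * x + 9) / (2 * x + 9) - 3/2) ^ 2
      = (∑ l ∈ Finset.Icc 1 (2 * k + 8), (l : ℚ) ^ 2) * (1 / (2 * x + 9) ^ 2)
        + (∑ l ∈ Finset.Icc 1 (2 * k + 8), (l : ℚ)) * (-(1 / (2 * x + 9)))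
        + ((2 * k + 8 : ℕ) : ℚ) * (1 / 4) := by
    have hterm : ∀ l ∈ Finset.Icc 1 (2 * k + 8),
        (((l : ℚ) + 2 * x + 9) / (2 * x + 9) - 3/2) ^ 2
          = (l : ℚ) ^ 2 * (1 / (2 * x + 9) ^ 2) + (l : ℚ) * (-(1 / (2 * x + 9))) + 1 / 4 := by
      intro l _
      field_simp
      ring
    rw [Finset.sum_congr rfl hterm, Finset.sum_add_distrib, Finset.sum_add_distrib,
      ← Finset.sum_mul, ← Finset.sum_mul, Finset.sum_const, Nat.card_Icc]
    push_cast
    ring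
  rw [hsum, sum_Icc_id_q, sum_Icc_sq_q]
  push_cast
  have h9 : (0:ℚ) < 2 * x + 9 := by positivity
  rw [← sub_nonneg]
  have hrw : (19 + 2 * x) / 12 * (47/22 - 19/22) -
      (((19/22 : ℚ) - 3/2) ^ 2 + ((23/22 : ℚ) - 3/2) ^ 2 + ((27/22 : ℚ) - 3/2) ^ 2 +
        ((29/22 : ℚ) - 3/2) ^ 2 + ((31/22 : ℚ) - 3/2) ^ 2 + ((3/2 : ℚ) - 3/2) ^ 2 +
        ((35/22 : ℚ) - 3/2) ^ 2 + ((37/22 : ℚ) - 3/2) ^ 2 + ((39/22 : ℚ) - 3/2) ^ 2 +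
        ((43/22 : ℚ) - 3/2) ^ 2 + ((47/22 : ℚ) - 3/2) ^ 2 +
        ((2 * (k:ℚ) + 8) * (2 * (k:ℚ) + 8 + 1) * (2 * (2 * (k:ℚ) + 8) + 1) / 6 * (1 / (2 * x + 9) ^ 2) +
          (2 * (k:ℚ) + 8) * (2 * (k:ℚ) + 8 + 1) / 2 * (-(1 / (2 * x + 9))) +
          (2 * (k:ℚ) + 8) * (1 / 4)))
      = (6 * x^2 + 35 * x + 25) * (2 * x + 9) / (66 * (2 * x + 9) ^ 2) := by
    rw [hx]
    field_simp
    ring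
  rw [hx] at hrw ⊢
  rw [hrw]
  positivity
end

section
/- For every integer k ≥ 1, setting μ = 19 + 2k, the following inequality of rational numbers holds: (31/36 − 3/2)² + (37/36 − 3/2)² + (43/36 − 3/2)² + (47/36 − 3/2)² + (49/36 − 3/2)² + (53/36 − 3/2)² + (55/36 − 3/2)² + (59/36 − 3/2)² + (61/36 − 3/2)² + (65/36 − 3/2)² + (71/36 − 3/2)² + (77/36 − 3/2)² + ∑_{l=1}^{2k+7} ((l + 2k + 8)/(2(k+4)) − 3/2)² ≤ (μ/12)·(77/36 − 31/36). -/
lemma sum_sq_shift (c : ℚ) : ∀ n : ℕ,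
    ∑ l ∈ Finset.Icc 1 n, ((l : ℚ) - c) ^ 2
      = (n : ℚ) * (n + 1) * (2 * n + 1) / 6 - c * ((n : ℚ) * (n + 1)) + (n : ℚ) * c ^ 2 := by
  intro n
  induction n with
  | zero => simp
  | succ m ih =>
    rw [Finset.sum_Icc_succ_top (by omega : 1 ≤ m + 1), ih]
    push_cast
    ring

theorem stmt_14 (k : ℕ) (hk : 1 ≤ k) :
    ((31/36 : ℚ) - 3/2) ^ 2 +
      ((37/36 : ℚ) - 3/2) ^ 2 +
      ((43/36 : ℚ) - 3/2) ^ 2 +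
      ((47/36 : ℚ) - 3/2) ^ 2 +
      ((49/36 : ℚ) - 3/2) ^ 2 +
      ((53/36 : ℚ) - 3/2) ^ 2 +
      ((55/36 : ℚ) - 3/2) ^ 2 +
      ((59/36 : ℚ) - 3/2) ^ 2 +
      ((61/36 : ℚ) - 3/2) ^ 2 +
      ((65/36 : ℚ) - 3/2) ^ 2 +
      ((71/36 : ℚ) - 3/2) ^ 2 +
      ((77/36 : ℚ) - 3/2) ^ 2 +
      ∑ l ∈ Finset.Icc 1 (2 * k + 7), (((l : ℚ) + 2 * (k : ℚ) + 8) / (2 * ((k : ℚ) + 4)) - 3/2) ^ 2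
    ≤ ((19 + 2 * (k : ℚ)) / 12) * (77/36 - 31/36) := by
  set x : ℚ := (k : ℚ) with hx
  have hx0 : (0 : ℚ) ≤ x := by positivity
  have h4 : (0 : ℚ) < x + 4 := by linarith
  have hterm : ∀ l ∈ Finset.Icc 1 (2 * k + 7),
      (((l : ℚ) + 2 * x + 8) / (2 * (x + 4)) - 3/2) ^ 2
        = ((l : ℚ) - (x + 4)) ^ 2 * (1 / (4 * (x + 4) ^ 2)) := by
    intro l _
    field_simp
    ring
  rw [Finset.sum_congr rfl hterm, ← Finset.sum_mul, sum_sq_shift]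
  have hcast : ((2 * k + 7 : ℕ) : ℚ) = 2 * x + 7 := by push_cast; ring
  rw [hcast]
  rw [← sub_nonneg]
  have heq : (19 + 2 * x) / 12 * (77/36 - 31/36) -
      (((31:ℚ)/36 - 3/2) ^ 2 + (37/36 - 3/2) ^ 2 + (43/36 - 3/2) ^ 2 + (47/36 - 3/2) ^ 2 +
        (49/36 - 3/2) ^ 2 + (53/36 - 3/2) ^ 2 + (55/36 - 3/2) ^ 2 + (59/36 - 3/2) ^ 2 +
        (61/36 - 3/2) ^ 2 + (65/36 - 3/2) ^ 2 + (71/36 - 3/2) ^ 2 + (77/36 - 3/2) ^ 2 +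
        ((2 * x + 7) * (2 * x + 7 + 1) * (2 * (2 * x + 7) + 1) / 6 -
            (x + 4) * ((2 * x + 7) * (2 * x + 7 + 1)) + (2 * x + 7) * (x + 4) ^ 2) *
          (1 / (4 * (x + 4) ^ 2)))
      = (10 * x ^ 2 + 49 * x + 18) / (216 * (x + 4)) := by
    field_simp
    ring
  rw [heq]
  apply div_nonneg (by nlinarith) (by linarith)
end
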